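/- Let R be a commutative ring and suppose f ∈ R[X] is a nonunit factor of X^n for some n ≥ 1. Then f is indecomposable if and only if f is very strongly irreducible. -/

import Mathlib

/-- A polynomial `f` is indecomposable if whenever `f = g * h`, then `g` or `h`
is strongly associate in `R[X]` to a constant polynomial. -/
def IndecPoly {R : Type*} [CommRing R] (f : Polynomial R) : Prop :=
  ∀ g h : Polynomial R, f = g * h →
    (∃ (a : R) (u : (Polynomial R)ˣ), g = Polynomial.C a * u) ∨
    (∃ (a : R) (u : (Polynomial R)ˣ), h = Polynomial.C a * u)

theorem factor_of_Xn_indecomposable_iff_vsi {R : Type*} [CommRing R]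
    (f : Polynomial R) (hfu : ¬IsUnit f)
    (hdvd : ∃ (n : ℕ) (g : Polynomial R), 1 ≤ n ∧ (Polynomial.X : Polynomial R) ^ n = f * g) :
    IndecPoly f ↔
      (f ≠ 0 ∧ ∀ g h : Polynomial R, f = g * h → IsUnit g ∨ IsUnit h) := by
  obtain ⟨n, w, hn, hw⟩ := hdvd
  have hne : f ≠ 0 := by
    rintro rfl
    rw [zero_mul] at hw
    have h1 : (1 : R) = 0 := by
      have := congrArg (fun p => Polynomial.coeff p n) hw
      simpa [Polynomial.coeff_X_pow] using this
    haveI : Subsingleton R := subsingleton_of_zero_eq_one h1.symm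
    exact hfu (isUnit_of_subsingleton 0)
  have key : ∀ (a : R) (p : Polynomial R), Polynomial.X ^ n = Polynomial.C a * p → IsUnit a := by
    intro a p hp
    have := congrArg (fun q => Polynomial.coeff q n) hp
    simp only [Polynomial.coeff_X_pow, if_pos rfl, Polynomial.coeff_C_mul] at this
    simp only [if_true] at this
    exact IsUnit.of_mul_eq_one (a := a) _ this.symm
  constructor
  · intro hind
    refine ⟨hne, fun g h hgh => ?_⟩
    rcases hind g h hgh with ⟨a, u, hg⟩ | ⟨a, u, hh⟩
    · left
      have ha : IsUnit a := key a (↑u * h * w) (by rw [hw, hgh, hg]; ring)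
      rw [hg]
      exact (Polynomial.isUnit_C.mpr ha).mul u.isUnit
    · right
      have ha : IsUnit a := key a (↑u * g * w) (by rw [hw, hgh, hh]; ring)
      rw [hh]
      exact (Polynomial.isUnit_C.mpr ha).mul u.isUnit
  · rintro ⟨-, hvsi⟩ g h hgh
    rcases hvsi g h hgh with hu | hu
    · exact Or.inl ⟨1, hu.unit, by rw [map_one, one_mul, hu.unit_spec]⟩
    · exact Or.inr ⟨1, hu.unit, by rw [map_one, one_mul, hu.unit_spec]⟩
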